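/- Suppose the unit circle S¹ ⊂ ℝ² is covered by two closed sets B₁ and B₂ such that for all u, v, w ∈ Bᵢ (i = 1, 2) one has (u·v)(u·w)(v·w) ≥ 0. Then there is a rotation of the circle after which B₁ equals the union of the two closed antipodal arcs {(cos θ, sin θ) : θ ∈ [π/2, π]} ∪ {(cos θ, sin θ) : θ ∈ [3π/2, 2π]} and B₂ equals the union {(cos θ, sin θ) : θ ∈ [0, π/2]} ∪ {(cos θ, sin θ) : θ ∈ [π, 3π/2]}; in particular B₁ ∩ B₂ consists of the four vertices of a square inscribed in S¹. -/

import Mathlib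

open scoped RealInnerProductSpace
open Real

/-- The point on the unit circle at angle `θ`. -/
noncomputable def circlePt (θ : ℝ) : EuclideanSpace ℝ (Fin 2) :=
  (WithLp.equiv 2 (Fin 2 → ℝ)).symm ![Real.cos θ, Real.sin θ]

lemma inner_circlePt (x y : ℝ) : (inner ℝ (circlePt x) (circlePt y) : ℝ) = Real.cos (x - y) := by
  simp [circlePt, PiLp.inner_apply, Fin.sum_univ_two, Real.cos_sub, RCLike.inner_apply]
  ring

lemma norm_circlePt (θ : ℝ) : ‖circlePt θ‖ = 1 := by
  simp [circlePt, EuclideanSpace.norm_eq, Fin.sum_univ_two, Real.norm_eq_abs, sq_abs]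


lemma continuous_circlePt : Continuous circlePt := by
  unfold circlePt
  have h : Continuous fun θ : ℝ => ![Real.cos θ, Real.sin θ] := by
    apply continuous_pi; intro i
    fin_cases i <;> simp <;> [exact Real.continuous_cos; exact Real.continuous_sin]
  exact (PiLp.continuous_toLp (p := 2) (β := fun _ : Fin 2 => ℝ)).comp h

lemma circlePt_add_period (x : ℝ) (k : ℤ) : circlePt (x + 2*π*k) = circlePt x := by
  have hc : Real.cos (x + 2*π*k) = Real.cos x := by
    have h : x + 2*π*k = x + (k:ℝ)*(2*π) := by push_cast; ring
    rw [h, Real.cos_add_int_mul_two_pi]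
  have hs : Real.sin (x + 2*π*k) = Real.sin x := by
    have h : x + 2*π*k = x + (k:ℝ)*(2*π) := by push_cast; ring
    rw [h, Real.sin_add_int_mul_two_pi]
  unfold circlePt; rw [hc, hs]

lemma exists_reduce (x : ℝ) : ∃ s : ℝ, 0 ≤ s ∧ s < 2*π ∧ ∃ k : ℤ, x = s + 2*π*k := by
  have h2π : (0:ℝ) < 2*π := by positivity
  refine ⟨x - 2*π*⌊x/(2*π)⌋, ?_, ?_, ⌊x/(2*π)⌋, by ring⟩
  · have h := Int.floor_le (x / (2*π))
    rw [le_div_iff₀ h2π] at h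
    linarith
  · have h := Int.lt_floor_add_one (x/(2*π))
    rw [div_lt_iff₀ h2π] at h
    push_cast at h ⊢
    linarith

lemma sin_two_reduce (s : ℝ) (k : ℤ) : Real.sin (2*(s + 2*π*k)) = Real.sin (2*s) := by
  have h : 2*(s + 2*π*k) = 2*s + ((2*k : ℤ):ℝ)*(2*π) := by push_cast; ring
  rw [h, Real.sin_add_int_mul_two_pi]

lemma exists_angle {x : EuclideanSpace ℝ (Fin 2)} (hx : ‖x‖ = 1) : ∃ θ, x = circlePt θ := by
  have h : (x 0)^2 + (x 1)^2 = 1 := by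
    have h1 := EuclideanSpace.norm_eq x
    rw [hx] at h1
    have h2 : Real.sqrt (∑ i : Fin 2, ‖x i‖^2) = 1 := h1.symm
    rw [Real.sqrt_eq_one] at h2
    simpa [Fin.sum_univ_two, Real.norm_eq_abs, sq_abs] using h2
  set z : ℂ := ⟨x 0, x 1⟩ with hz
  have habs : ‖z‖ = 1 := by
    rw [Complex.norm_def, Complex.normSq_mk, Real.sqrt_eq_one]
    nlinarith [h]
  have hz0 : z ≠ 0 := by
    intro h0; rw [h0] at habs; simp at habs
  refine ⟨Complex.arg z, ?_⟩
  have hc : Real.cos (Complex.arg z) = x 0 := by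
    rw [Complex.cos_arg hz0, habs]; simp [hz]
  have hs : Real.sin (Complex.arg z) = x 1 := by
    rw [Complex.sin_arg, habs]; simp [hz]
  apply (WithLp.equiv 2 (Fin 2 → ℝ)).injective
  funext i
  fin_cases i <;> simp [circlePt, hc, hs]

def Cond (B : Set (EuclideanSpace ℝ (Fin 2))) : Prop :=
  ∀ x y z : ℝ, circlePt x ∈ B → circlePt y ∈ B → circlePt z ∈ B →
    0 ≤ Real.cos (x - y) * Real.cos (x - z) * Real.cos (y - z)

-- closure lemma
lemma lemD {B : Set (EuclideanSpace ℝ (Fin 2))} (hB : IsClosed B) {c d : ℝ} (hcd : c < d)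
    (h : ∀ t ∈ Set.Ioo c d, circlePt t ∈ B) : ∀ t ∈ Set.Icc c d, circlePt t ∈ B := by
  intro t ht
  have h1 : circlePt t ∈ circlePt '' (closure (Set.Ioo c d)) := by
    rw [closure_Ioo hcd.ne]
    exact ⟨t, ht, rfl⟩
  have h2 : circlePt '' (closure (Set.Ioo c d)) ⊆ closure (circlePt '' (Set.Ioo c d)) :=
    image_closure_subset_closure_image continuous_circlePt
  have h3 : closure (circlePt '' (Set.Ioo c d)) ⊆ closure B := by
    apply closure_mono
    rintro _ ⟨u, hu, rfl⟩; exact h u hu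
  rw [hB.closure_eq] at h3
  exact h3 (h2 h1)

-- no arc longer than π/2
lemma lemA {B : Set (EuclideanSpace ℝ (Fin 2))} (hB : Cond B) {c d : ℝ}
    (harc : ∀ t ∈ Set.Icc c d, circlePt t ∈ B) (hlen : π/2 < d - c) : False := by
  have hπ := Real.pi_pos
  set l := min (d - c) (3*π/4) with hl
  have hl1 : π/2 < l := lt_min hlen (by linarith)
  have hl2 : l ≤ 3*π/4 := min_le_right _ _
  have hl3 : l ≤ d - c := min_le_left _ _
  have m1 : circlePt (c + l) ∈ B := harc _ ⟨by linarith, by linarith⟩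
  have m2 : circlePt (c + l/2) ∈ B := harc _ ⟨by linarith, by linarith⟩
  have m3 : circlePt c ∈ B := harc _ ⟨le_refl _, by linarith⟩
  have := hB (c + l) (c + l/2) c m1 m2 m3
  rw [show c + l - (c + l/2) = l/2 by ring, show c + l - c = l by ring,
    show c + l/2 - c = l/2 by ring] at this
  have hc1 : 0 < Real.cos (l/2) := Real.cos_pos_of_mem_Ioo ⟨by linarith, by linarith⟩
  have hc2 : Real.cos l < 0 := Real.cos_neg_of_pi_div_two_lt_of_lt hl1 (by linarith)
  exact absurd this (not_le.mpr (mul_neg_of_neg_of_pos (mul_neg_of_pos_of_neg hc1 hc2) hc1))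

-- arc in B of length ≤ π/2 pushes B out of shifted arc
lemma lemB {B : Set (EuclideanSpace ℝ (Fin 2))} (hB : Cond B) {c d : ℝ} (hcd : c < d)
    (hlen : d - c ≤ π/2) (harc : ∀ t ∈ Set.Ioo c d, circlePt t ∈ B) :
    ∀ t ∈ Set.Ioo (c + π/2) (d + π/2), circlePt t ∉ B := by
  have hπ := Real.pi_pos
  intro t ht hmem
  obtain ⟨ht1, ht2⟩ := ht
  have m1 : circlePt (((t - π/2) + d)/2) ∈ B := harc _ ⟨by linarith, by linarith⟩
  have m2 : circlePt ((c + (t - π/2))/2) ∈ B := harc _ ⟨by linarith, by linarith⟩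
  have key := hB t (((t - π/2) + d)/2) ((c + (t - π/2))/2) hmem m1 m2
  rw [show t - ((t - π/2) + d)/2 = (t + π/2 - d)/2 by ring,
      show t - (c + (t - π/2))/2 = (t - c + π/2)/2 by ring,
      show ((t - π/2) + d)/2 - (c + (t - π/2))/2 = (d - c)/2 by ring] at key
  have hc1 : 0 < Real.cos ((t + π/2 - d)/2) := Real.cos_pos_of_mem_Ioo ⟨by linarith, by linarith⟩
  have hc2 : Real.cos ((t - c + π/2)/2) < 0 :=
    Real.cos_neg_of_pi_div_two_lt_of_lt (by linarith) (by linarith)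
  have hc3 : 0 < Real.cos ((d - c)/2) := Real.cos_pos_of_mem_Ioo ⟨by linarith, by linarith⟩
  exact absurd key (not_le.mpr (mul_neg_of_neg_of_pos (mul_neg_of_pos_of_neg hc1 hc2) hc3))

-- two antipodal quarter arcs in B: no extra points
lemma lemC {B : Set (EuclideanSpace ℝ (Fin 2))} (hB : Cond B) {ψ : ℝ}
    (h1 : ∀ r ∈ Set.Icc 0 (π/2), circlePt (ψ + r) ∈ B)
    (h2 : ∀ r ∈ Set.Icc 0 (π/2), circlePt (ψ + π + r) ∈ B)
    {t : ℝ} (ht : circlePt t ∈ B) : 0 ≤ Real.sin (2*(t - ψ)) := by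
  have hπ := Real.pi_pos
  by_contra hneg
  push_neg at hneg
  obtain ⟨s, hs0, hs2, k, hk⟩ := exists_reduce (t - ψ)
  have hts : circlePt (ψ + s) = circlePt t := by
    rw [show t = (ψ + s) + 2*π*k by linarith]
    exact (circlePt_add_period (ψ + s) k).symm
  have hsin : Real.sin (2*s) < 0 := by
    rw [hk, sin_two_reduce] at hneg; exact hneg
  have hmem : circlePt (ψ + s) ∈ B := by rw [hts]; exact ht
  have hcase : (π/2 < s ∧ s < π) ∨ (3*π/2 < s ∧ s < 2*π) := by
    rcases le_or_gt s (π/2) with h|h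
    · exfalso
      have := Real.sin_nonneg_of_nonneg_of_le_pi (by linarith : (0:ℝ) ≤ 2*s) (by linarith)
      linarith
    rcases lt_or_ge s π with h2'|h2'
    · exact Or.inl ⟨h, h2'⟩
    rcases le_or_gt s (3*π/2) with h3|h3
    · exfalso
      have he := Real.sin_add_two_pi (2*s - 2*π)
      rw [show 2*s - 2*π + 2*π = 2*s by ring] at he
      have := Real.sin_nonneg_of_nonneg_of_le_pi (by linarith : (0:ℝ) ≤ 2*s - 2*π) (by linarith)
      linarith [he]
    · exact Or.inr ⟨h3, hs2⟩
  rcases hcase with ⟨ha, hb⟩ | ⟨ha, hb⟩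
  · -- s ∈ (π/2, π); points ψ+s, ψ+s/2, ψ+(s-π/2)/2
    have m1 : circlePt (ψ + s/2) ∈ B := h1 _ ⟨by linarith, by linarith⟩
    have m2 : circlePt (ψ + (s - π/2)/2) ∈ B := h1 _ ⟨by linarith, by linarith⟩
    have := hB (ψ + s) (ψ + s/2) (ψ + (s - π/2)/2) hmem m1 m2
    rw [show ψ + s - (ψ + s/2) = s/2 by ring, show ψ + s - (ψ + (s - π/2)/2) = s/2 + π/4 by ring,
      show ψ + s/2 - (ψ + (s - π/2)/2) = π/4 by ring] at this
    have hc1 : 0 < Real.cos (s/2) := Real.cos_pos_of_mem_Ioo ⟨by linarith, by linarith⟩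
    have hc2 : Real.cos (s/2 + π/4) < 0 := Real.cos_neg_of_pi_div_two_lt_of_lt (by linarith) (by linarith)
    have hc3 : 0 < Real.cos (π/4) := Real.cos_pos_of_mem_Ioo ⟨by linarith, by linarith⟩
    exact absurd this (not_le.mpr (mul_neg_of_neg_of_pos (mul_neg_of_pos_of_neg hc1 hc2) hc3))
  · -- s ∈ (3π/2, 2π); points ψ+s, ψ+π+(s-π)/2, ψ+π+(s-3π/2)/2
    have m1 : circlePt (ψ + π + (s - π)/2) ∈ B := h2 _ ⟨by linarith, by linarith⟩
    have m2 : circlePt (ψ + π + (s - 3*π/2)/2) ∈ B := h2 _ ⟨by linarith, by linarith⟩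
    have := hB (ψ + s) (ψ + π + (s - π)/2) (ψ + π + (s - 3*π/2)/2) hmem m1 m2
    rw [show ψ + s - (ψ + π + (s - π)/2) = (s - π)/2 by ring,
      show ψ + s - (ψ + π + (s - 3*π/2)/2) = (s - π)/2 + π/4 by ring,
      show ψ + π + (s - π)/2 - (ψ + π + (s - 3*π/2)/2) = π/4 by ring] at this
    have hc1 : 0 < Real.cos ((s - π)/2) := Real.cos_pos_of_mem_Ioo ⟨by linarith, by linarith⟩
    have hc2 : Real.cos ((s - π)/2 + π/4) < 0 := Real.cos_neg_of_pi_div_two_lt_of_lt (by linarith) (by linarith)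
    have hc3 : 0 < Real.cos (π/4) := Real.cos_pos_of_mem_Ioo ⟨by linarith, by linarith⟩
    exact absurd this (not_le.mpr (mul_neg_of_neg_of_pos (mul_neg_of_pos_of_neg hc1 hc2) hc3))

lemma not_all {B : Set (EuclideanSpace ℝ (Fin 2))} (hB : Cond B)
    (hall : ∀ t : ℝ, circlePt t ∈ B) : False := by
  have h1 : Real.cos (2*π/3) = -(1/2) := by
    rw [show 2*π/3 = π - π/3 by ring, Real.cos_pi_sub, Real.cos_pi_div_three]
  have h2 : Real.cos (4*π/3) = -(1/2) := by
    rw [show 4*π/3 = π + π/3 by ring, Real.cos_add, Real.cos_pi, Real.sin_pi,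
      Real.cos_pi_div_three]
    ring
  have key := hB 0 (2*π/3) (4*π/3) (hall _) (hall _) (hall _)
  rw [show (0:ℝ) - 2*π/3 = -(2*π/3) by ring, show (0:ℝ) - 4*π/3 = -(4*π/3) by ring,
    show 2*π/3 - 4*π/3 = -(2*π/3) by ring, Real.cos_neg, Real.cos_neg,
    h1, h2] at key
  norm_num at key

lemma sin_two_nonpos_cases {s : ℝ} (hs0 : 0 ≤ s) (hs2 : s < 2*π) (h : Real.sin (2*s) ≤ 0) :
    s = 0 ∨ (π/2 ≤ s ∧ s ≤ π) ∨ 3*π/2 ≤ s := by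
  have hπ := Real.pi_pos
  rcases eq_or_lt_of_le hs0 with h0|h0
  · exact Or.inl h0.symm
  rcases lt_or_ge s (π/2) with h1|h1
  · exact absurd h (not_le.mpr (Real.sin_pos_of_pos_of_lt_pi (by linarith) (by linarith)))
  rcases le_or_gt s π with h2|h2
  · exact Or.inr (Or.inl ⟨h1, h2⟩)
  rcases lt_or_ge s (3*π/2) with h3|h3
  · exfalso
    have he := Real.sin_add_two_pi (2*s - 2*π)
    rw [show 2*s - 2*π + 2*π = 2*s by ring] at he
    have := Real.sin_pos_of_pos_of_lt_pi (x := 2*s - 2*π) (by linarith) (by linarith)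
    linarith [he]
  · exact Or.inr (Or.inr h3)

lemma sin_two_nonneg_cases {s : ℝ} (hs0 : 0 ≤ s) (hs2 : s < 2*π) (h : 0 ≤ Real.sin (2*s)) :
    s ≤ π/2 ∨ (π ≤ s ∧ s ≤ 3*π/2) := by
  have hπ := Real.pi_pos
  rcases le_or_gt s (π/2) with h1|h1
  · exact Or.inl h1
  rcases lt_or_ge s π with h2|h2
  · exfalso
    have he := Real.sin_sub_pi (2*s)
    have := Real.sin_pos_of_pos_of_lt_pi (x := 2*s - π) (by linarith) (by linarith)
    linarith
  rcases le_or_gt s (3*π/2) with h3|h3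
  · exact Or.inr ⟨h2, h3⟩
  · exfalso
    have he := Real.sin_add_two_pi (2*s - 2*π)
    rw [show 2*s - 2*π + 2*π = 2*s by ring] at he
    have he2 := Real.sin_sub_pi (2*s - 2*π)
    have := Real.sin_pos_of_pos_of_lt_pi (x := 2*s - 2*π - π) (by linarith) (by linarith)
    linarith

lemma sin_two_nonpos_of_mem {θ : ℝ} (h : (π/2 ≤ θ ∧ θ ≤ π) ∨ (3*π/2 ≤ θ ∧ θ ≤ 2*π)) :
    Real.sin (2*θ) ≤ 0 := by
  have hπ := Real.pi_pos
  rcases h with ⟨h1, h2⟩ | ⟨h1, h2⟩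
  · have hs := Real.sin_nonneg_of_nonneg_of_le_pi (x := 2*θ - π) (by linarith) (by linarith)
    have he := Real.sin_sub_pi (2*θ)
    linarith
  · have he := Real.sin_add_two_pi (2*θ - 2*π)
    rw [show 2*θ - 2*π + 2*π = 2*θ by ring] at he
    have he2 := Real.sin_sub_pi (2*θ - 2*π)
    have hs := Real.sin_nonneg_of_nonneg_of_le_pi (x := 2*θ - 2*π - π) (by linarith) (by linarith)
    linarith

lemma sin_two_nonneg_of_mem {θ : ℝ} (h : (0 ≤ θ ∧ θ ≤ π/2) ∨ (π ≤ θ ∧ θ ≤ 3*π/2)) :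
    0 ≤ Real.sin (2*θ) := by
  have hπ := Real.pi_pos
  rcases h with ⟨h1, h2⟩ | ⟨h1, h2⟩
  · exact Real.sin_nonneg_of_nonneg_of_le_pi (by linarith) (by linarith)
  · have he := Real.sin_add_two_pi (2*θ - 2*π)
    rw [show 2*θ - 2*π + 2*π = 2*θ by ring] at he
    have hs := Real.sin_nonneg_of_nonneg_of_le_pi (x := 2*θ - 2*π) (by linarith) (by linarith)
    linarith

theorem stmt_3 (B : Fin 2 → Set (EuclideanSpace ℝ (Fin 2)))
    (hsub : ∀ i, B i ⊆ {x : EuclideanSpace ℝ (Fin 2) | ‖x‖ = 1})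
    (hclosed : ∀ i, IsClosed (B i))
    (hcover : B 0 ∪ B 1 = {x : EuclideanSpace ℝ (Fin 2) | ‖x‖ = 1})
    (hloc : ∀ i, ∀ u ∈ B i, ∀ v ∈ B i, ∀ w ∈ B i,
      (inner ℝ u v : ℝ) * (inner ℝ u w : ℝ) * (inner ℝ v w : ℝ) ≥ 0) :
    ∃ φ : ℝ,
      B 0 = (fun θ => circlePt (θ + φ)) '' (Set.Icc (π/2) π ∪ Set.Icc (3*π/2) (2*π)) ∧
      B 1 = (fun θ => circlePt (θ + φ)) '' (Set.Icc 0 (π/2) ∪ Set.Icc π (3*π/2)) ∧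
      B 0 ∩ B 1 = {circlePt φ, circlePt (φ + π/2), circlePt (φ + π), circlePt (φ + 3*π/2)} := by
  have hπ := Real.pi_pos
  have key : ∀ i, Cond (B i) := by
    intro i x y z hx hy hz
    have h := hloc i _ hx _ hy _ hz
    rwa [inner_circlePt, inner_circlePt, inner_circlePt] at h
  have cover' : ∀ t : ℝ, circlePt t ∈ B 0 ∨ circlePt t ∈ B 1 := by
    intro t
    have h : circlePt t ∈ B 0 ∪ B 1 := by rw [hcover]; exact norm_circlePt t
    exact h
  -- a point not in B 0
  obtain ⟨τ, hτ⟩ : ∃ τ : ℝ, circlePt τ ∉ B 0 := by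
    by_contra h; push_neg at h; exact not_all (key 0) h
  -- a point in B 0
  obtain ⟨θ₀, hθ₀⟩ : ∃ θ₀ : ℝ, circlePt θ₀ ∈ B 0 := by
    by_contra h; push_neg at h
    exact not_all (key 1) (fun t => (cover' t).resolve_left (h t))
  obtain ⟨s₀, hs₀0, hs₀2, k₀, hk₀⟩ := exists_reduce (θ₀ - τ)
  -- forward reach
  set S : Set ℝ := Set.Icc 0 (2*π) ∩ (fun s => circlePt (τ + s)) ⁻¹' (B 0) with hS
  have hSclosed : IsClosed S :=
    isClosed_Icc.inter (IsClosed.preimage (continuous_circlePt.comp (continuous_const.add continuous_id)) (hclosed 0))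
  have hSne : S.Nonempty := by
    refine ⟨s₀, ⟨hs₀0, le_of_lt hs₀2⟩, ?_⟩
    show circlePt (τ + s₀) ∈ B 0
    rw [show τ + s₀ = θ₀ + 2*π*(-k₀ : ℤ) by push_cast; linarith, circlePt_add_period]
    exact hθ₀
  have hSbdd : BddBelow S := ⟨0, fun x hx => hx.1.1⟩
  set β := sInf S with hβdef
  have hβS : β ∈ S := hSclosed.csInf_mem hSne hSbdd
  have hβmin : ∀ s, 0 ≤ s → s < β → circlePt (τ + s) ∉ B 0 := by
    intro s h0 hlt hmem
    exact absurd (csInf_le hSbdd ⟨⟨h0, le_trans hlt.le hβS.1.2⟩, hmem⟩) (not_le.mpr hlt)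
  -- backward reach
  set S' : Set ℝ := Set.Icc 0 (2*π) ∩ (fun s => circlePt (τ - s)) ⁻¹' (B 0) with hS'
  have hS'closed : IsClosed S' :=
    isClosed_Icc.inter (IsClosed.preimage (continuous_circlePt.comp (continuous_const.sub continuous_id)) (hclosed 0))
  have hS'ne : S'.Nonempty := by
    refine ⟨2*π - s₀, ⟨by linarith, by linarith⟩, ?_⟩
    show circlePt (τ - (2*π - s₀)) ∈ B 0
    rw [show τ - (2*π - s₀) = θ₀ + 2*π*(-k₀ - 1 : ℤ) by push_cast; linarith, circlePt_add_period]
    exact hθ₀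
  have hS'bdd : BddBelow S' := ⟨0, fun x hx => hx.1.1⟩
  set α := sInf S' with hαdef
  have hαS : α ∈ S' := hS'closed.csInf_mem hS'ne hS'bdd
  have hαmin : ∀ s, 0 ≤ s → s < α → circlePt (τ - s) ∉ B 0 := by
    intro s h0 hlt hmem
    exact absurd (csInf_le hS'bdd ⟨⟨h0, le_trans hlt.le hαS.1.2⟩, hmem⟩) (not_le.mpr hlt)
  clear_value β α
  have hβpos : 0 < β := by
    rcases eq_or_lt_of_le hβS.1.1 with h|h
    · exfalso; apply hτ
      have h2 : circlePt (τ + β) ∈ B 0 := hβS.2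
      rw [← h, add_zero] at h2
      exact h2
    · exact h
  have hαpos : 0 < α := by
    rcases eq_or_lt_of_le hαS.1.1 with h|h
    · exfalso; apply hτ
      have h2 : circlePt (τ - α) ∈ B 0 := hαS.2
      rw [← h, sub_zero] at h2
      exact h2
    · exact h
  have hβ2 : β ≤ 2*π := hβS.1.2
  have hα2 : α ≤ 2*π := hαS.1.2
  have hβB : circlePt (τ + β) ∈ B 0 := hβS.2
  have hαB : circlePt (τ - α) ∈ B 0 := hαS.2
  clear hβS hαS hSclosed hS'closed hSne hS'ne hSbdd hS'bdd hβdef hαdef hS hS'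
  set a := τ - α with hadef
  set b := τ + β with hbdef
  clear_value a b
  have hab : a < b := by rw [hadef, hbdef]; linarith
  have ha : circlePt a ∈ B 0 := hαB
  have hb : circlePt b ∈ B 0 := hβB
  have hgap : ∀ t ∈ Set.Ioo a b, circlePt t ∉ B 0 := by
    intro t ht hmem
    rcases le_or_gt τ t with h|h
    · exact hβmin (t - τ) (by linarith) (by have := ht.2; rw [hbdef] at this; linarith)
        (by rw [show τ + (t - τ) = t by ring]; exact hmem)
    · exact hαmin (τ - t) (by linarith) (by have := ht.1; rw [hadef] at this; linarith)
        (by rw [show τ - (τ - t) = t by ring]; exact hmem)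
  have hgap1 : ∀ t ∈ Set.Ioo a b, circlePt t ∈ B 1 :=
    fun t ht => (cover' t).resolve_left (hgap t ht)
  have hlen : b - a ≤ π/2 := by
    by_contra h
    push_neg at h
    exact lemA (key 1) (lemD (hclosed 1) hab hgap1) h
  have hstep1 := lemB (key 1) hab hlen hgap1
  have hB0arc : ∀ t ∈ Set.Ioo (a + π/2) (b + π/2), circlePt t ∈ B 0 :=
    fun t ht => (cover' t).resolve_right (hstep1 t ht)
  have hbeq : b = a + π/2 := by
    by_contra hne
    have hlt : b - a < π/2 := lt_of_le_of_ne hlen (fun h => hne (by linarith))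
    have hv : circlePt ((a+b)/2 + π/2) ∈ B 0 := hB0arc _ ⟨by linarith, by linarith⟩
    have hk := key 0 b ((a+b)/2 + π/2) a hb hv ha
    rw [show b - ((a+b)/2 + π/2) = (b-a)/2 - π/2 by ring,
      show (a+b)/2 + π/2 - a = (b-a)/2 + π/2 by ring] at hk
    have hc1 : 0 < Real.cos ((b-a)/2 - π/2) :=
      Real.cos_pos_of_mem_Ioo ⟨by linarith, by linarith⟩
    have hc2 : 0 < Real.cos (b - a) := Real.cos_pos_of_mem_Ioo ⟨by linarith, by linarith⟩
    have hc3 : Real.cos ((b-a)/2 + π/2) < 0 :=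
      Real.cos_neg_of_pi_div_two_lt_of_lt (by linarith) (by linarith)
    exact absurd hk (not_le.mpr (mul_neg_of_pos_of_neg (mul_pos hc1 hc2) hc3))
  -- the four arcs
  have A1 : ∀ t ∈ Set.Icc a (a + π/2), circlePt t ∈ B 1 := by
    apply lemD (hclosed 1) (by linarith)
    intro t ht
    exact hgap1 t (by rw [hbeq]; exact ht)
  have A0 : ∀ t ∈ Set.Icc (a + π/2) (a + π), circlePt t ∈ B 0 := by
    apply lemD (hclosed 0) (by linarith)
    intro t ht
    exact hB0arc t ⟨ht.1, by rw [hbeq]; have := ht.2; linarith⟩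
  have hstep2 := lemB (key 0) (show a + π/2 < a + π by linarith) (by linarith)
    (fun t ht => A0 t (Set.Ioo_subset_Icc_self ht))
  have A1' : ∀ t ∈ Set.Icc (a + π) (a + 3*π/2), circlePt t ∈ B 1 := by
    apply lemD (hclosed 1) (by linarith)
    intro t ht
    refine ((cover' t).resolve_left (hstep2 t ?_))
    exact ⟨by rw [show a + π/2 + π/2 = a + π by ring]; exact ht.1,
      by rw [show a + π + π/2 = a + 3*π/2 by ring]; exact ht.2⟩
  have hstep3 := lemB (key 1) (show a + π < a + 3*π/2 by linarith) (by linarith)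
    (fun t ht => A1' t (Set.Ioo_subset_Icc_self ht))
  have A0' : ∀ t ∈ Set.Icc (a + 3*π/2) (a + 2*π), circlePt t ∈ B 0 := by
    apply lemD (hclosed 0) (by linarith)
    intro t ht
    refine ((cover' t).resolve_right (hstep3 t ?_))
    exact ⟨by rw [show a + π + π/2 = a + 3*π/2 by ring]; exact ht.1,
      by rw [show a + 3*π/2 + π/2 = a + 2*π by ring]; exact ht.2⟩
  -- characterizations
  have C0 : ∀ t : ℝ, circlePt t ∈ B 0 ↔ Real.sin (2*(t - a)) ≤ 0 := by
    intro t
    constructor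
    · intro ht
      have h := lemC (key 0) (ψ := a + π/2)
        (fun r hr => A0 _ ⟨by linarith [hr.1], by linarith [hr.2]⟩)
        (fun r hr => A0' _ ⟨by linarith [hr.1], by linarith [hr.2]⟩) ht
      rw [show 2*(t - (a + π/2)) = 2*(t - a) - π by ring, Real.sin_sub_pi] at h
      linarith
    · intro hsin
      obtain ⟨s, hs0, hs2, k, hk⟩ := exists_reduce (t - a)
      have hts : circlePt (a + s) = circlePt t := by
        rw [show t = (a + s) + 2*π*k by linarith]
        exact (circlePt_add_period (a + s) k).symm
      have hsin' : Real.sin (2*s) ≤ 0 := by rw [hk, sin_two_reduce] at hsin; exact hsin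
      rw [← hts]
      rcases sin_two_nonpos_cases hs0 hs2 hsin' with h|h|h
      · rw [h, add_zero]; exact ha
      · exact A0 _ ⟨by linarith [h.1], by linarith [h.2]⟩
      · exact A0' _ ⟨by linarith, by linarith⟩
  have C1 : ∀ t : ℝ, circlePt t ∈ B 1 ↔ 0 ≤ Real.sin (2*(t - a)) := by
    intro t
    constructor
    · intro ht
      exact lemC (key 1) (ψ := a)
        (fun r hr => A1 _ ⟨by linarith [hr.1], by linarith [hr.2]⟩)
        (fun r hr => A1' _ ⟨by linarith [hr.1], by linarith [hr.2]⟩) ht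
    · intro hsin
      obtain ⟨s, hs0, hs2, k, hk⟩ := exists_reduce (t - a)
      have hts : circlePt (a + s) = circlePt t := by
        rw [show t = (a + s) + 2*π*k by linarith]
        exact (circlePt_add_period (a + s) k).symm
      have hsin' : 0 ≤ Real.sin (2*s) := by rw [hk, sin_two_reduce] at hsin; exact hsin
      rw [← hts]
      rcases sin_two_nonneg_cases hs0 hs2 hsin' with h|h
      · exact A1 _ ⟨by linarith, by linarith⟩
      · exact A1' _ ⟨by linarith [h.1], by linarith [h.2]⟩
  -- final assembly
  refine ⟨a, ?_, ?_, ?_⟩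
  · ext x
    simp only [Set.mem_image, Set.mem_union, Set.mem_Icc]
    constructor
    · intro hx
      obtain ⟨θ, rfl⟩ := exists_angle (hsub 0 hx)
      have hsin := (C0 θ).1 hx
      obtain ⟨s, hs0, hs2, k, hk⟩ := exists_reduce (θ - a)
      have hts : circlePt (a + s) = circlePt θ := by
        rw [show θ = (a + s) + 2*π*k by linarith]
        exact (circlePt_add_period (a + s) k).symm
      have hsin' : Real.sin (2*s) ≤ 0 := by rw [hk, sin_two_reduce] at hsin; exact hsin
      rcases sin_two_nonpos_cases hs0 hs2 hsin' with h|h|h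
      · refine ⟨2*π, Or.inr ⟨by linarith, le_refl _⟩, ?_⟩
        show circlePt (2*π + a) = circlePt θ
        rw [show 2*π + a = (a + s) + 2*π*((1:ℤ)) by push_cast; linarith, circlePt_add_period]
        exact hts
      · exact ⟨s, Or.inl h, by show circlePt (s + a) = _; rw [show s + a = a + s by ring]; exact hts⟩
      · exact ⟨s, Or.inr ⟨h, by linarith⟩,
          by show circlePt (s + a) = _; rw [show s + a = a + s by ring]; exact hts⟩
    · rintro ⟨θ, hθ, rfl⟩
      apply (C0 (θ + a)).2
      rw [show 2*(θ + a - a) = 2*θ by ring]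
      exact sin_two_nonpos_of_mem hθ
  · ext x
    simp only [Set.mem_image, Set.mem_union, Set.mem_Icc]
    constructor
    · intro hx
      obtain ⟨θ, rfl⟩ := exists_angle (hsub 1 hx)
      have hsin := (C1 θ).1 hx
      obtain ⟨s, hs0, hs2, k, hk⟩ := exists_reduce (θ - a)
      have hts : circlePt (a + s) = circlePt θ := by
        rw [show θ = (a + s) + 2*π*k by linarith]
        exact (circlePt_add_period (a + s) k).symm
      have hsin' : 0 ≤ Real.sin (2*s) := by rw [hk, sin_two_reduce] at hsin; exact hsin
      rcases sin_two_nonneg_cases hs0 hs2 hsin' with h|h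
      · exact ⟨s, Or.inl ⟨hs0, h⟩,
          by show circlePt (s + a) = _; rw [show s + a = a + s by ring]; exact hts⟩
      · exact ⟨s, Or.inr h,
          by show circlePt (s + a) = _; rw [show s + a = a + s by ring]; exact hts⟩
    · rintro ⟨θ, hθ, rfl⟩
      apply (C1 (θ + a)).2
      rw [show 2*(θ + a - a) = 2*θ by ring]
      exact sin_two_nonneg_of_mem hθ
  · ext x
    simp only [Set.mem_inter_iff, Set.mem_insert_iff, Set.mem_singleton_iff]
    constructor
    · rintro ⟨hx0, hx1⟩
      obtain ⟨θ, rfl⟩ := exists_angle (hsub 0 hx0)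
      have e0 := (C0 θ).1 hx0
      have e1 := (C1 θ).1 hx1
      have he : Real.sin (2*(θ - a)) = 0 := le_antisymm e0 e1
      rw [Real.sin_eq_zero_iff] at he
      obtain ⟨n, hn⟩ := he
      have hnm : 4 * (n / 4) + n % 4 = n := Int.mul_ediv_add_emod n 4
      have hm0 : 0 ≤ n % 4 := Int.emod_nonneg n (by norm_num)
      have hm4 : n % 4 < 4 := Int.emod_lt_of_pos n (by norm_num)
      set m := n % 4 with hmdef
      set q := n / 4 with hqdef
      have hncast : 4*(q:ℝ) + (m:ℝ) = (n:ℝ) := by exact_mod_cast congrArg (Int.cast : ℤ → ℝ) hnm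
      have hθ : circlePt θ = circlePt (a + (m:ℝ)*π/2) := by
        rw [show θ = (a + (m:ℝ)*π/2) + 2*π*q by linear_combination (-1/2)*hn - (π/2)*hncast]
        exact circlePt_add_period _ _
      have hm : m = 0 ∨ m = 1 ∨ m = 2 ∨ m = 3 := by omega
      rcases hm with h|h|h|h <;> rw [h] at hθ
      · left; rw [hθ]; congr 1 <;> (push_cast; ring)
      · right; left; rw [hθ]; congr 1 <;> (push_cast; ring)
      · right; right; left; rw [hθ]; congr 1 <;> (push_cast; ring)
      · right; right; right; rw [hθ]; congr 1 <;> (push_cast; ring)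
    · intro hx
      rcases hx with rfl|rfl|rfl|rfl
      · exact ⟨(C0 a).2 (by rw [show 2*(a - a) = 0 by ring, Real.sin_zero]),
          (C1 a).2 (by rw [show 2*(a - a) = 0 by ring, Real.sin_zero])⟩
      · constructor
        · apply (C0 _).2; rw [show 2*(a + π/2 - a) = π by ring, Real.sin_pi]
        · apply (C1 _).2; rw [show 2*(a + π/2 - a) = π by ring, Real.sin_pi]
      · constructor
        · apply (C0 _).2; rw [show 2*(a + π - a) = 2*π by ring, Real.sin_two_pi]
        · apply (C1 _).2; rw [show 2*(a + π - a) = 2*π by ring, Real.sin_two_pi]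
      · constructor
        · apply (C0 _).2; rw [show 2*(a + 3*π/2 - a) = π + 2*π by ring, Real.sin_add_two_pi, Real.sin_pi]
        · apply (C1 _).2; rw [show 2*(a + 3*π/2 - a) = π + 2*π by ring, Real.sin_add_two_pi, Real.sin_pi]
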